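/- Let α > −1 be real and n ≥ 1 an integer. Let x₁, …, x_n be distinct positive real numbers and w₁^R, …, w_n^R real numbers such that for every real polynomial p with deg p ≤ 2n − 1, ∫_0^{∞} p(x)·x^{α+1}·e^{−x} dx = Σ_{i=1}^n w_i^R·p(x_i). Set w₀ = Γ(α + 1)·Γ(α + 2)·Γ(n + 1)/Γ(n + α + 2) and w_i = w_i^R/x_i for i = 1, …, n. Then for every real polynomial p with deg p ≤ 2n, ∫_0^{∞} p(x)·x^{α}·e^{−x} dx = w₀·p(0) + Σ_{i=1}^n w_i·p(x_i). (Gauss–Radau–Laguerre quadrature has maximal degree of exactness 2n.) -/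

import Mathlib

open Polynomial MeasureTheory Real Set Finset

lemma integrableOn_monomial {β : ℝ} (hβ : -1 < β) (k : ℕ) :
    IntegrableOn (fun t : ℝ => t ^ k * t ^ β * Real.exp (-t)) (Set.Ioi 0) := by
  have h : (0:ℝ) < k + β + 1 := by linarith [Nat.cast_nonneg (α := ℝ) k]
  have := Real.GammaIntegral_convergent h
  refine this.congr_fun (fun t ht => ?_) measurableSet_Ioi
  have ht' : (0:ℝ) < t := ht
  beta_reduce
  rw [show (k:ℝ) + β + 1 - 1 = (k:ℝ) + β by ring, Real.rpow_add ht', Real.rpow_natCast]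
  ring

lemma integral_monomial {β : ℝ} (hβ : -1 < β) (k : ℕ) :
    ∫ t in Set.Ioi (0:ℝ), t ^ k * t ^ β * Real.exp (-t) = Real.Gamma ((k:ℝ) + β + 1) := by
  have h : (0:ℝ) < k + β + 1 := by linarith [Nat.cast_nonneg (α := ℝ) k]
  rw [Real.Gamma_eq_integral h]
  refine setIntegral_congr_fun measurableSet_Ioi (fun t ht => ?_)
  have ht' : (0:ℝ) < t := ht
  rw [show (k:ℝ) + β + 1 - 1 = (k:ℝ) + β by ring, Real.rpow_add ht', Real.rpow_natCast]
  ring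

noncomputable def J (β : ℝ) (p : Polynomial ℝ) : ℝ :=
  ∫ t in Set.Ioi (0:ℝ), p.eval t * t ^ β * Real.exp (-t)

lemma J_integrable {β : ℝ} (hβ : -1 < β) (p : Polynomial ℝ) :
    IntegrableOn (fun t : ℝ => p.eval t * t ^ β * Real.exp (-t)) (Set.Ioi 0) := by
  have : ∀ t : ℝ, p.eval t * t ^ β * Real.exp (-t)
      = ∑ k ∈ Finset.range (p.natDegree + 1), p.coeff k * (t ^ k * t ^ β * Real.exp (-t)) := by
    intro t
    rw [Polynomial.eval_eq_sum_range, Finset.sum_mul, Finset.sum_mul]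
    exact Finset.sum_congr rfl fun k _ => by ring
  simp only [this]
  exact integrable_finset_sum _ fun k _ => (integrableOn_monomial hβ k).const_mul (p.coeff k)

lemma J_formula {β : ℝ} (hβ : -1 < β) (p : Polynomial ℝ) {N : ℕ} (hN : p.natDegree < N) :
    J β p = ∑ k ∈ Finset.range N, p.coeff k * Real.Gamma ((k:ℝ) + β + 1) := by
  have : ∀ t : ℝ, p.eval t * t ^ β * Real.exp (-t)
      = ∑ k ∈ Finset.range N, p.coeff k * (t ^ k * t ^ β * Real.exp (-t)) := by
    intro t
    rw [Polynomial.eval_eq_sum_range' hN, Finset.sum_mul, Finset.sum_mul]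
    exact Finset.sum_congr rfl fun k _ => by ring
  rw [J]
  simp only [this]
  rw [integral_finset_sum]
  · exact Finset.sum_congr rfl fun k _ => by
      rw [integral_const_mul, integral_monomial hβ k]
  · exact fun k _ => (integrableOn_monomial hβ k).const_mul (p.coeff k)

lemma J_add {β : ℝ} (hβ : -1 < β) (p q : Polynomial ℝ) : J β (p + q) = J β p + J β q := by
  rw [J, J, J, ← integral_add (J_integrable hβ p) (J_integrable hβ q)]
  refine setIntegral_congr_fun measurableSet_Ioi (fun t _ => ?_)
  simp only [Polynomial.eval_add]; ring

lemma J_Cmul {β : ℝ} (c : ℝ) (p : Polynomial ℝ) : J β (Polynomial.C c * p) = c * J β p := by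
  rw [J, J, ← integral_const_mul]
  refine setIntegral_congr_fun measurableSet_Ioi (fun t _ => ?_)
  simp only [Polynomial.eval_mul, Polynomial.eval_C]; ring

lemma J_sum {β : ℝ} (hβ : -1 < β) {ι : Type*} (s : Finset ι) (f : ι → Polynomial ℝ) :
    J β (∑ i ∈ s, f i) = ∑ i ∈ s, J β (f i) := by
  classical
  induction s using Finset.induction_on with
  | empty => simp [J]
  | insert _ _ h ih => rw [Finset.sum_insert h, Finset.sum_insert h, J_add hβ, ih]

lemma J_pos {β : ℝ} (hβ : -1 < β) {r : Polynomial ℝ} (hr : r ≠ 0) : 0 < J β (r * r) := by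
  rw [J]
  rw [setIntegral_pos_iff_support_of_nonneg_ae]
  · refine lt_of_lt_of_le ?_ (measure_mono (s := (Set.Ioi 0 \ (r.roots.toFinset : Set ℝ))) ?_)
    · rw [measure_diff_null]
      · simp [Real.volume_Ioi]
      · exact (Set.Finite.measure_zero (Finset.finite_toSet _) _)
    · intro t ht
      refine ⟨?_, ht.1⟩
      have ht0 : (0:ℝ) < t := ht.1
      have hrt : r.eval t ≠ 0 := by
        intro h0
        exact ht.2 (by simpa [Polynomial.mem_roots, hr] using h0)
      rw [Function.mem_support, Polynomial.eval_mul]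
      positivity
  · refine Filter.eventually_of_mem (self_mem_ae_restrict measurableSet_Ioi) (fun t ht => ?_)
    have ht0 : (0:ℝ) < t := ht
    simp only [Pi.zero_apply, Polynomial.eval_mul]
    have := Real.rpow_pos_of_pos ht0 β
    nlinarith [Real.exp_pos (-t), sq_nonneg (r.eval t), mul_nonneg (mul_nonneg (sq_nonneg (r.eval t)) this.le) (Real.exp_pos (-t)).le]
  · exact J_integrable hβ (r * r)

lemma pascal_split (n : ℕ) (f : ℕ → ℝ) :
    ∑ k ∈ Finset.range (n + 2), (-1:ℝ)^k * ((n+1).choose k) * f k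
      = ∑ k ∈ Finset.range (n + 1), (-1:ℝ)^k * (n.choose k) * (f k - f (k+1)) := by
  have L : ∑ k ∈ Finset.range (n + 2), (-1:ℝ)^k * ((n+1).choose k) * f k
      = f 0 + ∑ k ∈ Finset.range (n + 1),
          (-1:ℝ)^(k+1) * ((n.choose k : ℝ) + (n.choose (k+1) : ℝ)) * f (k+1) := by
    rw [Finset.sum_range_succ' _ (n+1)]
    simp only [Nat.choose_zero_right, Nat.cast_one, pow_zero, one_mul, Nat.choose_succ_succ,
      Nat.cast_add]
    ring
  have R1 : ∑ k ∈ Finset.range (n + 1), (-1:ℝ)^k * (n.choose k) * f k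
      = f 0 + ∑ k ∈ Finset.range (n + 1), (-1:ℝ)^(k+1) * (n.choose (k+1) : ℝ) * f (k+1) := by
    rw [Finset.sum_range_succ (fun k => (-1:ℝ)^(k+1) * (n.choose (k+1) : ℝ) * f (k+1)) n,
      Nat.choose_succ_self, Finset.sum_range_succ' _ n]
    simp only [Nat.choose_zero_right, Nat.cast_one, pow_zero, one_mul, Nat.cast_zero]
    ring
  simp only [mul_sub, Finset.sum_sub_distrib]
  rw [L, R1, add_sub_assoc, ← Finset.sum_sub_distrib]
  congr 1
  exact Finset.sum_congr rfl fun k _ => by ring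


lemma findiff : ∀ (n : ℕ) (P : Polynomial ℝ), P.natDegree < n →
    ∑ k ∈ Finset.range (n + 1), (-1:ℝ)^k * (n.choose k) * P.eval (k:ℝ) = 0 := by
  intro n
  induction n with
  | zero => exact fun P hP => absurd hP (Nat.not_lt_zero _)
  | succ n ih =>
    intro P hP
    set Q : Polynomial ℝ := P - P.comp (X + C 1) with hQdef
    have hQeval : ∀ k : ℕ, Q.eval (k:ℝ) = P.eval (k:ℝ) - P.eval ((k:ℝ)+1) := by
      intro k
      simp [hQdef, Polynomial.eval_comp]
    have key : ∑ k ∈ Finset.range (n + 2), (-1:ℝ)^k * ((n+1).choose k) * P.eval (k:ℝ)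
        = ∑ k ∈ Finset.range (n + 1), (-1:ℝ)^k * (n.choose k) * Q.eval (k:ℝ) := by
      rw [pascal_split n (fun k => P.eval (k:ℝ))]
      refine Finset.sum_congr rfl fun k _ => ?_
      rw [hQeval k]
      push_cast
      ring
    rw [key]
    by_cases hQ : Q = 0
    · simp [hQ]
    · have hP0 : P ≠ 0 := by
        intro h; exact hQ (by simp [hQdef, h])
      have hdQ : Q.natDegree < n := by
        have hcomp_nd : (P.comp (X + C 1)).natDegree = P.natDegree := by
          rw [Polynomial.natDegree_comp, Polynomial.natDegree_X_add_C, mul_one]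
        have hPnd : P.natDegree ≠ 0 := by
          intro h0
          obtain ⟨c, rfl⟩ := Polynomial.natDegree_eq_zero.mp h0
          exact hQ (by simp [hQdef])
        have hcomp0 : P.comp (X + C 1) ≠ 0 := by
          intro h
          have := hcomp_nd
          rw [h] at this
          simp at this
          exact hPnd this.symm
        have hdeg : Q.degree < P.degree := by
          refine Polynomial.degree_sub_lt ?_ hP0 ?_
          · rw [Polynomial.degree_eq_natDegree hP0, Polynomial.degree_eq_natDegree hcomp0,
              hcomp_nd]
          · rw [Polynomial.leadingCoeff_comp
                (by rw [Polynomial.natDegree_X_add_C]; exact one_ne_zero)]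
            rw [Polynomial.leadingCoeff_X_add_C, one_pow, mul_one]
        have : Q.natDegree < P.natDegree := Polynomial.natDegree_lt_natDegree hQ hdeg
        omega
      exact ih Q hdQ

lemma gamma_ratio {c : ℝ} (hc : 0 < c) (j : ℕ) :
    Real.Gamma (c + j) = Real.Gamma c * ∏ m ∈ Finset.range j, (c + m) := by
  induction j with
  | zero => simp
  | succ j ih =>
    have h1 : c + (j+1:ℕ) = (c + j) + 1 := by push_cast; ring
    have h2 : c + (j:ℝ) ≠ 0 := by positivity
    rw [h1, Real.Gamma_add_one h2, ih, Finset.prod_range_succ]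
    ring

lemma claim1 {c : ℝ} (hc : 0 < c) {n j : ℕ} (hj : j < n) :
    ∑ k ∈ Finset.range (n + 1),
      (-1:ℝ)^k * (n.choose k) * (Real.Gamma ((k:ℝ) + c + j) / Real.Gamma ((k:ℝ) + c)) = 0 := by
  set P : Polynomial ℝ := ∏ m ∈ Finset.range j, (X + C (c + m)) with hPdef
  have hPd : P.natDegree < n := by
    have : P.natDegree = j := by
      rw [hPdef, Polynomial.natDegree_prod_of_monic _ _
        (fun m _ => Polynomial.monic_X_add_C _)]
      rw [Finset.sum_congr rfl (fun (m : ℕ) _ => Polynomial.natDegree_X_add_C (c + (m:ℝ))),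
        Finset.sum_const, Finset.card_range, smul_eq_mul, mul_one]
    omega
  have hsum := findiff n P hPd
  rw [← hsum]
  refine Finset.sum_congr rfl fun k _ => ?_
  have hkc : (0:ℝ) < (k:ℝ) + c := by positivity
  have hG : Real.Gamma ((k:ℝ) + c) ≠ 0 := (Real.Gamma_pos_of_pos hkc).ne'
  have hval : Real.Gamma ((k:ℝ) + c + j) = Real.Gamma ((k:ℝ) + c) * P.eval (k:ℝ) := by
    rw [gamma_ratio hkc j, hPdef, Polynomial.eval_prod]
    congr 1
    refine Finset.prod_congr rfl fun m _ => ?_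
    simp
    ring
  rw [hval, mul_div_cancel_left₀ _ hG]

lemma claim3 : ∀ (n : ℕ) {y : ℝ}, 0 < y →
    ∑ k ∈ Finset.range (n + 1), (-1:ℝ)^k * (n.choose k) / ((k:ℝ) + y)
      = (n.factorial) * Real.Gamma y / Real.Gamma (y + n + 1) := by
  intro n
  induction n with
  | zero =>
    intro y hy
    have hG0 : Real.Gamma y ≠ 0 := (Real.Gamma_pos_of_pos hy).ne'
    simp only [Finset.range_one, Finset.sum_singleton, Nat.choose_self, Nat.cast_one, pow_zero,
      Nat.cast_zero, Nat.factorial_zero, add_zero, zero_add]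
    rw [Real.Gamma_add_one hy.ne', one_mul]
    rw [eq_div_iff (by positivity : y * Real.Gamma y ≠ 0)]
    field_simp
  | succ n ih =>
    intro y hy
    have split : ∑ k ∈ Finset.range (n + 2), (-1:ℝ)^k * ((n+1).choose k) / ((k:ℝ) + y)
        = ∑ k ∈ Finset.range (n + 1), (-1:ℝ)^k * (n.choose k) / ((k:ℝ) + y)
          - ∑ k ∈ Finset.range (n + 1), (-1:ℝ)^k * (n.choose k) / ((k:ℝ) + (y+1)) := by
      have hps := pascal_split n (fun k => 1 / ((k:ℝ) + y))
      simp only [mul_sub, Finset.sum_sub_distrib] at hps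
      calc ∑ k ∈ Finset.range (n + 2), (-1:ℝ)^k * ((n+1).choose k) / ((k:ℝ) + y)
          = ∑ k ∈ Finset.range (n + 2), (-1:ℝ)^k * ((n+1).choose k) * (1 / ((k:ℝ) + y)) := by
            exact Finset.sum_congr rfl fun k _ => by ring
        _ = _ := by
            rw [hps]
            congr 1
            · exact Finset.sum_congr rfl fun k _ => by ring
            · refine Finset.sum_congr rfl fun k _ => ?_
              push_cast
              ring
    rw [split, ih hy, ih (show (0:ℝ) < y+1 by positivity)]
    have h1 : Real.Gamma (y + 1) = y * Real.Gamma y := Real.Gamma_add_one hy.ne'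
    have hyn : (0:ℝ) < y + (n:ℝ) + 1 := by positivity
    have h2 : Real.Gamma (y + (n:ℝ) + 1 + 1) = (y + (n:ℝ) + 1) * Real.Gamma (y + (n:ℝ) + 1) :=
      Real.Gamma_add_one hyn.ne'
    have h3 : y + 1 + (n:ℝ) + 1 = y + (n:ℝ) + 1 + 1 := by ring
    have h4 : y + ((n+1 : ℕ) : ℝ) + 1 = y + (n:ℝ) + 1 + 1 := by push_cast; ring
    rw [h3, h4, h2, h1, Nat.factorial_succ]
    push_cast
    have hG : Real.Gamma (y + (n:ℝ) + 1) ≠ 0 := (Real.Gamma_pos_of_pos hyn).ne'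
    have hG0 : Real.Gamma y ≠ 0 := (Real.Gamma_pos_of_pos hy).ne'
    field_simp
    ring

lemma J_sub {β : ℝ} (hβ : -1 < β) (p q : Polynomial ℝ) : J β (p - q) = J β p - J β q := by
  have h := J_add hβ (p - q) q
  rw [sub_add_cancel] at h
  linarith

lemma J_CXpow {β : ℝ} (hβ : -1 < β) (c : ℝ) (m : ℕ) :
    J β (Polynomial.C c * X ^ m) = c * Real.Gamma ((m:ℝ) + β + 1) := by
  rw [J_Cmul]
  congr 1
  rw [J]
  simp only [Polynomial.eval_pow, Polynomial.eval_X]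
  exact integral_monomial hβ m

lemma J_X_mul (β : ℝ) (q : Polynomial ℝ) : J β (X * q) = J (β + 1) q := by
  rw [J, J]
  refine setIntegral_congr_fun measurableSet_Ioi fun t ht => ?_
  have ht0 : (0:ℝ) < t := ht
  rw [Polynomial.eval_mul, Polynomial.eval_X, Real.rpow_add_one ht0.ne']
  ring
theorem stmt_13 (α : ℝ) (hα : -1 < α) (n : ℕ) (hn : 1 ≤ n)
    (x : Fin n → ℝ) (hx : ∀ i, 0 < x i) (hinj : Function.Injective x)
    (wR : Fin n → ℝ)
    (hrule : ∀ p : Polynomial ℝ, p.natDegree ≤ 2 * n - 1 →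
      ∫ t in Set.Ioi (0 : ℝ), p.eval t * t ^ (α + 1) * Real.exp (-t)
        = ∑ i, wR i * p.eval (x i))
    (w₀ : ℝ) (hw₀ : w₀ = Real.Gamma (α + 1) * Real.Gamma (α + 2) * Real.Gamma ((n : ℝ) + 1)
        / Real.Gamma ((n : ℝ) + α + 2))
    (wt : Fin n → ℝ) (hwt : ∀ i, wt i = wR i / x i) :
    ∀ p : Polynomial ℝ, p.natDegree ≤ 2 * n →
      ∫ t in Set.Ioi (0 : ℝ), p.eval t * t ^ α * Real.exp (-t)
        = w₀ * p.eval 0 + ∑ i, wt i * p.eval (x i) := by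
  classical
  have hβ : (-1:ℝ) < α + 1 := by linarith
  have hΓa1 : (0:ℝ) < Real.Gamma (α + 1) := Real.Gamma_pos_of_pos (by linarith)
  have hΓa2 : (0:ℝ) < Real.Gamma (α + 2) := Real.Gamma_pos_of_pos (by linarith)
  have hΓn : (0:ℝ) < Real.Gamma ((n:ℝ) + α + 2) :=
    Real.Gamma_pos_of_pos (by have := Nat.cast_nonneg (α := ℝ) n; linarith)
  -- hrule in terms of J
  have hruleJ : ∀ p : Polynomial ℝ, p.natDegree ≤ 2 * n - 1 →
      J (α + 1) p = ∑ i, wR i * p.eval (x i) := fun p hp => hrule p hp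
  -- the node polynomial
  set ℓ : Polynomial ℝ := ∏ i, (X - Polynomial.C (x i)) with hℓdef
  have hℓmonic : ℓ.Monic := monic_prod_of_monic _ _ fun i _ => monic_X_sub_C _
  have hℓdeg : ℓ.natDegree = n := by
    rw [hℓdef, Polynomial.natDegree_prod_of_monic _ _ (fun i _ => monic_X_sub_C _)]
    simp
  have hℓeval : ∀ i, ℓ.eval (x i) = 0 := by
    intro i
    rw [hℓdef, Polynomial.eval_prod]
    exact Finset.prod_eq_zero (Finset.mem_univ i) (by simp)
  -- orthogonality of ℓ
  have horthℓ : ∀ s : Polynomial ℝ, s.natDegree < n → J (α + 1) (ℓ * s) = 0 := by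
    intro s hs
    by_cases h0 : s = 0
    · simp [h0, J]
    · have hdeg : (ℓ * s).natDegree ≤ 2 * n - 1 := by
        rw [Polynomial.natDegree_mul (hℓmonic.ne_zero) h0, hℓdeg]
        omega
      rw [hruleJ _ hdeg]
      refine Finset.sum_eq_zero fun i _ => ?_
      rw [Polynomial.eval_mul, hℓeval i, zero_mul, mul_zero]
  -- the explicit quasi-Laguerre polynomial
  set a : ℕ → ℝ := fun k => (-1:ℝ)^k * (n.choose k) *
      (Real.Gamma ((n:ℝ) + α + 2) / Real.Gamma ((k:ℝ) + α + 2)) with hadef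
  set L : Polynomial ℝ := ∑ k ∈ Finset.range (n+1), Polynomial.C (a k) * X ^ k with hLdef
  have hLco : ∀ m : ℕ, L.coeff m = if m ∈ Finset.range (n+1) then a m else 0 := by
    intro m
    rw [hLdef, Polynomial.finset_sum_coeff]
    simp only [Polynomial.coeff_C_mul, Polynomial.coeff_X_pow, mul_ite, mul_one, mul_zero]
    exact Finset.sum_ite_eq (Finset.range (n+1)) m a
  have han : a n = (-1:ℝ)^n := by
    rw [hadef]
    simp [div_self hΓn.ne']
  have hLdeg : L.natDegree ≤ n := by
    rw [Polynomial.natDegree_le_iff_coeff_eq_zero]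
    intro m hm
    rw [hLco m, if_neg (by simp; omega)]
  -- orthogonality of L against monomials
  have horthLpow : ∀ j : ℕ, j < n → J (α + 1) (L * X ^ j) = 0 := by
    intro j hj
    have hc : (0:ℝ) < α + 2 := by linarith
    have expand : L * X ^ j = ∑ k ∈ Finset.range (n+1), Polynomial.C (a k) * X ^ (k + j) := by
      rw [hLdef, Finset.sum_mul]
      exact Finset.sum_congr rfl fun k _ => by rw [mul_assoc, ← pow_add]
    rw [expand, J_sum hβ]
    have term : ∀ k ∈ Finset.range (n+1), J (α+1) (Polynomial.C (a k) * X ^ (k + j))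
        = Real.Gamma ((n:ℝ) + α + 2) * ((-1:ℝ)^k * (n.choose k) *
            (Real.Gamma ((k:ℝ) + (α+2) + j) / Real.Gamma ((k:ℝ) + (α+2)))) := by
      intro k _
      have hak : a k = (-1:ℝ)^k * (n.choose k) *
          (Real.Gamma ((n:ℝ) + α + 2) / Real.Gamma ((k:ℝ) + α + 2)) := rfl
      rw [J_CXpow hβ, hak,
        show ((k + j : ℕ):ℝ) + (α+1) + 1 = (k:ℝ) + (α+2) + (j:ℝ) by push_cast; ring,
        show (k:ℝ) + (α+2) = (k:ℝ) + α + 2 by ring]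
      ring
    rw [Finset.sum_congr rfl term, ← Finset.mul_sum, claim1 hc hj, mul_zero]
  -- orthogonality of L in general
  have horthL : ∀ s : Polynomial ℝ, s.natDegree < n → J (α + 1) (L * s) = 0 := by
    intro s hs
    have hrep : s = ∑ j ∈ Finset.range n, Polynomial.C (s.coeff j) * X ^ j := by
      conv_lhs => rw [Polynomial.as_sum_range' s n hs]
      exact Finset.sum_congr rfl fun j _ => (Polynomial.C_mul_X_pow_eq_monomial).symm
    have expand : L * s = ∑ j ∈ Finset.range n, Polynomial.C (s.coeff j) * (L * X ^ j) := by
      conv_lhs => rw [hrep]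
      rw [Finset.mul_sum]
      exact Finset.sum_congr rfl fun j _ => by ring
    rw [expand, J_sum hβ]
    refine Finset.sum_eq_zero fun j hj => ?_
    rw [J_Cmul, horthLpow j (Finset.mem_range.mp hj), mul_zero]
  -- ℓ = (-1)^n L
  have hℓL : ℓ = Polynomial.C ((-1:ℝ)^n) * L := by
    by_contra hne
    set d : Polynomial ℝ := ℓ - Polynomial.C ((-1:ℝ)^n) * L with hddef
    have hd0 : d ≠ 0 := fun h => hne (by rwa [hddef, sub_eq_zero] at h)
    have hdn : d.coeff n = 0 := by
      rw [hddef, Polynomial.coeff_sub, Polynomial.coeff_C_mul, hLco n,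
        if_pos (Finset.self_mem_range_succ n), han]
      have : ℓ.coeff n = 1 := by
        have := hℓmonic
        rw [Polynomial.Monic, Polynomial.leadingCoeff, hℓdeg] at this
        exact this
      rw [this, ← pow_add, ← two_mul, pow_mul, neg_one_sq, one_pow, sub_self]
    have hdd : d.natDegree < n := by
      have h1 : d.natDegree ≤ n := by
        rw [hddef]
        refine le_trans (Polynomial.natDegree_sub_le _ _) ?_
        simp only [max_le_iff]
        exact ⟨le_of_eq hℓdeg, le_trans (Polynomial.natDegree_C_mul_le _ _) hLdeg⟩
      rcases lt_or_eq_of_le h1 with h | h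
      · exact h
      · exfalso
        have := Polynomial.leadingCoeff_ne_zero.mpr hd0
        rw [Polynomial.leadingCoeff, h] at this
        exact this hdn
    have hsplit : d * d = ℓ * d - Polynomial.C ((-1:ℝ)^n) * (L * d) := by
      rw [hddef]; ring
    have hJdd : J (α+1) (d * d) = 0 := by
      rw [hsplit, J_sub hβ, horthℓ d hdd, J_Cmul, horthL d hdd, mul_zero, sub_zero]
    exact absurd hJdd (ne_of_gt (J_pos hβ hd0))
  -- value of L at 0
  have hL0 : L.eval 0 = Real.Gamma ((n:ℝ) + α + 2) / Real.Gamma (α + 2) := by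
    rw [hLdef, Polynomial.eval_finset_sum]
    rw [Finset.sum_eq_single 0]
    · simp [hadef]
    · intro k _ hk
      simp [zero_pow hk]
    · intro h
      exact absurd (Finset.mem_range.mpr (by omega)) h
  set c0 := ℓ.eval 0 with hc0def
  have hc0 : c0 = (-1:ℝ)^n * (Real.Gamma ((n:ℝ) + α + 2) / Real.Gamma (α + 2)) := by
    rw [hc0def, hℓL, Polynomial.eval_mul, Polynomial.eval_C, hL0]
  have hc0ne : c0 ≠ 0 := by
    rw [hc0]
    exact mul_ne_zero (pow_ne_zero _ (by norm_num)) (by positivity)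
  -- J α applied to L and ℓ
  have hJL : J α L = (n.factorial : ℝ) * Real.Gamma (α + 1) := by
    rw [hLdef, J_sum hα]
    have term : ∀ k ∈ Finset.range (n+1), J α (Polynomial.C (a k) * X ^ k)
        = Real.Gamma ((n:ℝ) + α + 2) * ((-1:ℝ)^k * (n.choose k) / ((k:ℝ) + (α + 1))) := by
      intro k _
      have hak : a k = (-1:ℝ)^k * (n.choose k) *
          (Real.Gamma ((n:ℝ) + α + 2) / Real.Gamma ((k:ℝ) + α + 2)) := rfl
      have hk1 : (0:ℝ) < (k:ℝ) + α + 1 := by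
        have := Nat.cast_nonneg (α := ℝ) k; linarith
      have hΓk1 : (0:ℝ) < Real.Gamma ((k:ℝ) + α + 1) := Real.Gamma_pos_of_pos hk1
      have hrec : Real.Gamma ((k:ℝ) + α + 2) = ((k:ℝ) + α + 1) * Real.Gamma ((k:ℝ) + α + 1) := by
        rw [show (k:ℝ) + α + 2 = ((k:ℝ) + α + 1) + 1 by ring, Real.Gamma_add_one hk1.ne']
      rw [J_CXpow hα, hak, hrec]
      rw [show (k:ℝ) + (α + 1) = (k:ℝ) + α + 1 by ring]
      field_simp
    rw [Finset.sum_congr rfl term, ← Finset.mul_sum, claim3 n (show (0:ℝ) < α + 1 by linarith)]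
    rw [show α + 1 + (n:ℝ) + 1 = (n:ℝ) + α + 2 by ring]
    field_simp
  have hJℓ : J α ℓ = c0 * w₀ := by
    rw [hℓL, J_Cmul, hJL, hc0, hw₀, Real.Gamma_nat_eq_factorial]
    field_simp
  -- the key identity
  have hkey : ∑ i, wR i / x i = Real.Gamma (α + 1) - w₀ := by
    set s₀ : Polynomial ℝ := (Polynomial.C c0 - ℓ).divX with hs0def
    have hXs₀ : X * s₀ = Polynomial.C c0 - ℓ := by
      have h := Polynomial.X_mul_divX_add (Polynomial.C c0 - ℓ)
      have hco : (Polynomial.C c0 - ℓ).coeff 0 = 0 := by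
        rw [Polynomial.coeff_sub, Polynomial.coeff_C_zero, Polynomial.coeff_zero_eq_eval_zero,
          ← hc0def, sub_self]
      rw [hco, Polynomial.C_0, add_zero] at h
      exact h
    have hs0deg : s₀.natDegree ≤ 2 * n - 1 := by
      rw [hs0def, Polynomial.natDegree_divX_eq_natDegree_tsub_one]
      have h1 : (Polynomial.C c0 - ℓ).natDegree ≤ n :=
        le_trans (Polynomial.natDegree_sub_le _ _)
          (by simp [hℓdeg, Polynomial.natDegree_C])
      omega
    have hs0eval : ∀ i, s₀.eval (x i) = c0 / x i := by
      intro i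
      have h := congrArg (Polynomial.eval (x i)) hXs₀
      simp only [Polynomial.eval_mul, Polynomial.eval_X, Polynomial.eval_sub,
        Polynomial.eval_C, hℓeval i, sub_zero] at h
      rw [eq_div_iff (hx i).ne']
      linarith [h]
    have h1 := hruleJ s₀ hs0deg
    have h2 : J (α+1) s₀ = c0 * (Real.Gamma (α + 1) - w₀) := by
      have hC : J α (Polynomial.C c0) = c0 * Real.Gamma (α + 1) := by
        rw [show (Polynomial.C c0 : Polynomial ℝ) = Polynomial.C c0 * X ^ 0 by
            rw [pow_zero, mul_one],
          J_CXpow hα]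
        norm_num
      rw [← J_X_mul α s₀, hXs₀, J_sub hα, hC, hJℓ]
      ring
    have h3 : c0 * (Real.Gamma (α + 1) - w₀) = ∑ i, wR i * (c0 / x i) := by
      rw [← h2, h1]
      exact Finset.sum_congr rfl fun i _ => by rw [hs0eval i]
    have h4 : (∑ i, wR i * (c0 / x i)) = c0 * ∑ i, wR i / x i := by
      rw [Finset.mul_sum]
      exact Finset.sum_congr rfl fun i _ => by ring
    have h5 := h3.trans h4
    exact (mul_left_cancel₀ hc0ne h5).symm
  -- final assembly
  intro p hp
  set q := p.divX with hqdef
  have hpq : X * q + Polynomial.C (p.coeff 0) = p := Polynomial.X_mul_divX_add p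
  have hqdeg : q.natDegree ≤ 2 * n - 1 := by
    rw [hqdef, Polynomial.natDegree_divX_eq_natDegree_tsub_one]
    omega
  have hJq := hruleJ q hqdeg
  have hLHS : (∫ t in Set.Ioi (0:ℝ), p.eval t * t ^ α * Real.exp (-t))
      = J (α+1) q + p.eval 0 * Real.Gamma (α + 1) := by
    have e1 : J α p = J α (X * q) + J α (Polynomial.C (p.coeff 0)) := by
      rw [← J_add hα]
      exact congrArg (J α) hpq.symm
    have e2 : J α (Polynomial.C (p.coeff 0)) = p.eval 0 * Real.Gamma (α + 1) := by
      rw [show (Polynomial.C (p.coeff 0) : Polynomial ℝ) = Polynomial.C (p.coeff 0) * X ^ 0 by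
          rw [pow_zero, mul_one],
        J_CXpow hα, Polynomial.coeff_zero_eq_eval_zero]
      norm_num
    show J α p = _
    rw [e1, e2, J_X_mul α q]
  have hpe : ∀ i, p.eval (x i) = x i * q.eval (x i) + p.eval 0 := by
    intro i
    conv_lhs => rw [← hpq]
    rw [Polynomial.eval_add, Polynomial.eval_mul, Polynomial.eval_X, Polynomial.eval_C,
      Polynomial.coeff_zero_eq_eval_zero]
  have hRHS : (∑ i, wt i * p.eval (x i))
      = (∑ i, wR i * q.eval (x i)) + p.eval 0 * ∑ i, wR i / x i := by
    rw [Finset.mul_sum, ← Finset.sum_add_distrib]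
    refine Finset.sum_congr rfl fun i _ => ?_
    have hxi : x i ≠ 0 := (hx i).ne'
    rw [hwt i, hpe i]
    field_simp
  rw [hLHS, hJq, hRHS, hkey]
  ring
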